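/- (Theorem 1, trajectory part.) Assume H is invertible and let x_0 ∈ ℝⁿ. Let u* be the profile with u*_i(t) = −(1/(r_i·d_i))·B̂_iᵀ·exp((T−t)Λᵀ)·L̂_i·H⁻¹·exp(TΛ)·x_0 for t ∈ [0,T] and u*_i(t) = 0 for t ∉ [0,T], and let x* = x_{u*} be its trajectory from x_0. Then x*(τ) = exp(τΛ)·x_0, and for every t ∈ [0,T], x*(t+τ) = exp(tΛ)·x*(τ) − exp(τΛ)·∑_{j=1}^n ( ∫₀ᵗ exp((t−s)Λ)·S_j·exp((T−s)Λᵀ) ds )·(1/d_j)·L̂_j·H⁻¹·exp(TΛ)·x_0; in particular x*(t_f) = exp(τΛ)·H⁻¹·exp(TΛ)·x_0. -/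

import Mathlib

open Matrix MeasureTheory
open scoped Matrix

noncomputable section

/-- The matrix exponential of a real `n × n` matrix. -/
def mexp {n : ℕ} (A : Matrix (Fin n) (Fin n) ℝ) : Matrix (Fin n) (Fin n) ℝ :=
  NormedSpace.exp A

/-- An admissible control of the delayed game: a bounded measurable function `u : ℝ → ℝ`
with `u s = 0` for `s < 0`. -/
def AdmissibleD (u : ℝ → ℝ) : Prop :=
  Measurable u ∧ (∃ C, ∀ s, |u s| ≤ C) ∧ ∀ s < 0, u s = 0

/-- An admissible control of the delay-free game: a bounded measurable function. -/
def AdmissibleF (u : ℝ → ℝ) : Prop :=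
  Measurable u ∧ ∃ C, ∀ s, |u s| ≤ C

/-- Data of the differential games of opinion formation: the system matrix `Λ`
(the continuous-time Hegselmann–Krause matrix `Λ = D⁻¹A − I`), the input delay `τ`,
the terminal time `tf`, and for each player `i` the input vector `B i`, the control
weight `r i`, the neighborhood size `d i = |𝒩ᵢ|`, the agent-`i` graph Laplacian `L i`
and the stubbornness coefficient `ω i`. -/
structure GameData (n : ℕ) where
  Λ : Matrix (Fin n) (Fin n) ℝ
  τ : ℝ
  tf : ℝ
  B : Fin n → Fin n → ℝ
  r : Fin n → ℝ
  d : Fin n → ℝ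
  L : Fin n → Matrix (Fin n) (Fin n) ℝ
  ω : Fin n → ℝ

namespace GameData

variable {n : ℕ} (G : GameData n)

/-- The standing hypotheses: `τ ≥ 0`, `t_f > τ`, `rᵢ > 0`, `dᵢ > 0`, each `Lᵢ` symmetric
positive semidefinite, and `ωᵢ ∈ [0,1]`. -/
def Valid : Prop :=
  0 ≤ G.τ ∧ G.τ < G.tf ∧ (∀ i, 0 < G.r i) ∧ (∀ i, 0 < G.d i) ∧
    (∀ i, (G.L i).PosSemidef) ∧ ∀ i, G.ω i ∈ Set.Icc (0 : ℝ) 1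

/-- `T = t_f − τ`. -/
def T : ℝ := G.tf - G.τ

/-- `B̂ᵢ = exp(−τΛ)·Bᵢ`. -/
def Bhat (i : Fin n) : Fin n → ℝ := (mexp ((-G.τ) • G.Λ)).mulVec (G.B i)

/-- `L̂ᵢ = exp(τΛᵀ)·Lᵢ·exp(τΛ)`. -/
def Lhat (i : Fin n) : Matrix (Fin n) (Fin n) ℝ :=
  mexp (G.τ • G.Λᵀ) * G.L i * mexp (G.τ • G.Λ)

/-- `Sᵢ = (1/rᵢ)·B̂ᵢ·B̂ᵢᵀ`. -/
def S (i : Fin n) : Matrix (Fin n) (Fin n) ℝ :=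
  (1 / G.r i) • vecMulVec (G.Bhat i) (G.Bhat i)

/-- The matrix `∫₀ᵗ exp((t−s)Λ)·Sᵢ·exp((T−s)Λᵀ) ds` (entrywise integral). -/
def Phi (T' : ℝ) (i : Fin n) (t : ℝ) : Matrix (Fin n) (Fin n) ℝ :=
  Matrix.of fun a b =>
    ∫ s in (0:ℝ)..t, (mexp ((t - s) • G.Λ) * G.S i * mexp ((T' - s) • G.Λᵀ)) a b

/-- `Ψᵢ = ∫₀ᵀ exp((T−s)Λ)·Sᵢ·exp((T−s)Λᵀ) ds` with `T = t_f − τ`. -/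
def Psi (i : Fin n) : Matrix (Fin n) (Fin n) ℝ := G.Phi G.T i G.T

/-- `H = I + ∑ⱼ (1/dⱼ)·Ψⱼ·L̂ⱼ`. -/
def H : Matrix (Fin n) (Fin n) ℝ :=
  1 + ∑ j : Fin n, (1 / G.d j) • (G.Psi j * G.Lhat j)

/-- `Wᵢ`: the matrix whose `(i,i)` entry is `ωᵢ` and all other entries are `0`. -/
def W (i : Fin n) : Matrix (Fin n) (Fin n) ℝ := Matrix.single i i (G.ω i)

/-- `Ŵᵢ = exp(τΛᵀ)·Wᵢ·exp(τΛ)`. -/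
def What (i : Fin n) : Matrix (Fin n) (Fin n) ℝ :=
  mexp (G.τ • G.Λᵀ) * G.W i * mexp (G.τ • G.Λ)

/-- `Ĥ = I + ∑ⱼ Ψⱼ·(Ŵⱼ + ((1−ωⱼ)/dⱼ)·L̂ⱼ)`. -/
def Hhat : Matrix (Fin n) (Fin n) ℝ :=
  1 + ∑ j : Fin n, G.Psi j * (G.What j + ((1 - G.ω j) / G.d j) • G.Lhat j)

/-- The trajectory of the delayed game:
`x_u(t) = exp(tΛ)·x₀ + ∫₀ᵗ exp((t−s)Λ)·(∑ⱼ Bⱼ·uⱼ(s−τ)) ds`. -/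
def xtraj (x0 : Fin n → ℝ) (u : Fin n → ℝ → ℝ) (t : ℝ) : Fin n → ℝ :=
  (mexp (t • G.Λ)).mulVec x0 +
    ∫ s in (0:ℝ)..t, (mexp ((t - s) • G.Λ)).mulVec (∑ j : Fin n, u j (s - G.τ) • G.B j)

/-- The trajectory of the delay-free game:
`y_u(t) = exp(tΛ)·y₀ + ∫₀ᵗ exp((t−s)Λ)·(∑ⱼ B̂ⱼ·uⱼ(s)) ds`. -/
def ytraj (y0 : Fin n → ℝ) (u : Fin n → ℝ → ℝ) (t : ℝ) : Fin n → ℝ :=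
  (mexp (t • G.Λ)).mulVec y0 +
    ∫ s in (0:ℝ)..t, (mexp ((t - s) • G.Λ)).mulVec (∑ j : Fin n, u j s • G.Bhat j)

/-- Player `i`'s cost in the delayed game:
`Jᵢ(u) = (1/dᵢ)·x_u(t_f)ᵀ·Lᵢ·x_u(t_f) + ∫₀^{t_f} rᵢ·uᵢ(t−τ)² dt`. -/
def J (x0 : Fin n → ℝ) (i : Fin n) (u : Fin n → ℝ → ℝ) : ℝ :=
  (1 / G.d i) * (G.xtraj x0 u G.tf ⬝ᵥ (G.L i).mulVec (G.xtraj x0 u G.tf)) +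
    ∫ t in (0:ℝ)..G.tf, G.r i * u i (t - G.τ) ^ 2

/-- Player `i`'s cost in the delay-free game:
`Ĵᵢ(u) = (1/dᵢ)·y_u(T)ᵀ·L̂ᵢ·y_u(T) + ∫₀ᵀ rᵢ·uᵢ(t)² dt`. -/
def JF (y0 : Fin n → ℝ) (i : Fin n) (u : Fin n → ℝ → ℝ) : ℝ :=
  (1 / G.d i) * (G.ytraj y0 u G.T ⬝ᵥ (G.Lhat i).mulVec (G.ytraj y0 u G.T)) +
    ∫ t in (0:ℝ)..G.T, G.r i * u i t ^ 2

/-- Player `i`'s stubborn cost in the delayed game. -/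
def Jstub (x0 : Fin n → ℝ) (i : Fin n) (u : Fin n → ℝ → ℝ) : ℝ :=
  (G.xtraj x0 u G.tf - x0) ⬝ᵥ (G.W i).mulVec (G.xtraj x0 u G.tf - x0) +
    ((1 - G.ω i) / G.d i) * (G.xtraj x0 u G.tf ⬝ᵥ (G.L i).mulVec (G.xtraj x0 u G.tf)) +
    ∫ t in (0:ℝ)..G.tf, G.r i * u i (t - G.τ) ^ 2

/-- Player `i`'s stubborn cost in the delay-free game, with reference opinion `x₀`. -/
def JstubF (x0 y0 : Fin n → ℝ) (i : Fin n) (u : Fin n → ℝ → ℝ) : ℝ :=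
  ((mexp (G.τ • G.Λ)).mulVec (G.ytraj y0 u G.T) - x0) ⬝ᵥ
      (G.W i).mulVec ((mexp (G.τ • G.Λ)).mulVec (G.ytraj y0 u G.T) - x0) +
    ((1 - G.ω i) / G.d i) * (G.ytraj y0 u G.T ⬝ᵥ (G.Lhat i).mulVec (G.ytraj y0 u G.T)) +
    ∫ t in (0:ℝ)..G.T, G.r i * u i t ^ 2

/-- Open-loop Nash equilibrium of the delayed game. -/
def NashD (x0 : Fin n → ℝ) (u : Fin n → ℝ → ℝ) : Prop :=
  (∀ i, AdmissibleD (u i)) ∧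
    ∀ i, ∀ v : ℝ → ℝ, AdmissibleD v →
      G.J x0 i u ≤ G.J x0 i (Function.update u i v)

/-- Open-loop Nash equilibrium of the delay-free game. -/
def NashF (y0 : Fin n → ℝ) (u : Fin n → ℝ → ℝ) : Prop :=
  (∀ i, AdmissibleF (u i)) ∧
    ∀ i, ∀ v : ℝ → ℝ, AdmissibleF v →
      G.JF y0 i u ≤ G.JF y0 i (Function.update u i v)

/-- Open-loop Nash equilibrium of the stubborn delayed game. -/
def NashStubD (x0 : Fin n → ℝ) (u : Fin n → ℝ → ℝ) : Prop :=
  (∀ i, AdmissibleD (u i)) ∧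
    ∀ i, ∀ v : ℝ → ℝ, AdmissibleD v →
      G.Jstub x0 i u ≤ G.Jstub x0 i (Function.update u i v)

/-- Open-loop Nash equilibrium of the stubborn delay-free game. -/
def NashStubF (x0 y0 : Fin n → ℝ) (u : Fin n → ℝ → ℝ) : Prop :=
  (∀ i, AdmissibleF (u i)) ∧
    ∀ i, ∀ v : ℝ → ℝ, AdmissibleF v →
      G.JstubF x0 y0 i u ≤ G.JstubF x0 y0 i (Function.update u i v)

end GameData

section Helpers

lemma mexp_smul_add {n : ℕ} (Λ : Matrix (Fin n) (Fin n) ℝ) (a b : ℝ) :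
    mexp ((a + b) • Λ) = mexp (a • Λ) * mexp (b • Λ) := by
  rw [add_smul]
  exact Matrix.exp_add_of_commute _ _ (((Commute.refl Λ).smul_left a).smul_right b)

lemma continuous_mexp_smul {n : ℕ} (Λ : Matrix (Fin n) (Fin n) ℝ) {f : ℝ → ℝ}
    (hf : Continuous f) : Continuous fun s => mexp (f s • Λ) := by
  letI : SeminormedRing (Matrix (Fin n) (Fin n) ℝ) := Matrix.linftyOpSemiNormedRing
  letI : NormedRing (Matrix (Fin n) (Fin n) ℝ) := Matrix.linftyOpNormedRing
  letI : NormedAlgebra ℝ (Matrix (Fin n) (Fin n) ℝ) := Matrix.linftyOpNormedAlgebra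
  letI : NormedAlgebra ℚ (Matrix (Fin n) (Fin n) ℝ) := Matrix.linftyOpNormedAlgebra
  exact (NormedSpace.exp_continuous (𝔸 := Matrix (Fin n) (Fin n) ℝ)).comp (hf.smul continuous_const)

lemma intervalIntegral_pi_apply {n : ℕ} {f : ℝ → Fin n → ℝ} {a b : ℝ}
    (hf : IntervalIntegrable f MeasureTheory.volume a b) (i : Fin n) :
    (∫ s in a..b, f s) i = ∫ s in a..b, f s i :=
  ((ContinuousLinearMap.proj (R := ℝ) (φ := fun _ : Fin n => ℝ) i).intervalIntegral_comp_comm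
    hf).symm

lemma vecMulVec_mulVec' {n : ℕ} (a b w : Fin n → ℝ) :
    (vecMulVec a b) *ᵥ w = (b ⬝ᵥ w) • a := by
  ext i
  simp only [Matrix.mulVec, dotProduct, vecMulVec_apply, Pi.smul_apply, smul_eq_mul,
    Finset.sum_mul]
  exact Finset.sum_congr rfl fun j _ => by ring

lemma mulVec_finset_sum {n : ℕ} {ι : Type*} (s : Finset ι) (M : Matrix (Fin n) (Fin n) ℝ)
    (f : ι → Fin n → ℝ) : M *ᵥ (∑ i ∈ s, f i) = ∑ i ∈ s, M *ᵥ f i :=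
  map_sum M.mulVecLin f s

lemma finset_sum_mulVec {n : ℕ} {ι : Type*} (s : Finset ι) (A : ι → Matrix (Fin n) (Fin n) ℝ)
    (w : Fin n → ℝ) : (∑ i ∈ s, A i) *ᵥ w = ∑ i ∈ s, A i *ᵥ w := by
  ext a
  simp only [Matrix.mulVec, dotProduct, Finset.sum_apply, Matrix.sum_apply,
    Finset.sum_mul]
  rw [Finset.sum_comm]

lemma integral_mulVec {n : ℕ} {M : ℝ → Matrix (Fin n) (Fin n) ℝ} (hM : Continuous M)
    (v : Fin n → ℝ) (a b : ℝ) :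
    (∫ s in a..b, (M s) *ᵥ v) = (Matrix.of fun i j => ∫ s in a..b, M s i j) *ᵥ v := by
  have hcont : Continuous fun s => (M s) *ᵥ v := hM.matrix_mulVec continuous_const
  funext i
  rw [intervalIntegral_pi_apply (hcont.intervalIntegrable a b) i]
  show (∫ s in a..b, ∑ j, M s i j * v j) = _
  simp only [Matrix.mulVec, dotProduct, Matrix.of_apply]
  rw [intervalIntegral.integral_finset_sum]
  · exact Finset.sum_congr rfl fun j _ => intervalIntegral.integral_mul_const _ _
  · exact fun j _ => ((hM.matrix_elem i j).mul continuous_const).intervalIntegrable a b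

lemma of_integral_mul_left {n : ℕ} (C : Matrix (Fin n) (Fin n) ℝ)
    {M : ℝ → Matrix (Fin n) (Fin n) ℝ} (hM : Continuous M) (a b : ℝ) :
    (Matrix.of fun i j => ∫ s in a..b, (C * M s) i j) =
      C * Matrix.of fun i j => ∫ s in a..b, M s i j := by
  ext i j
  simp only [Matrix.of_apply, Matrix.mul_apply]
  rw [intervalIntegral.integral_finset_sum]
  · exact Finset.sum_congr rfl fun k _ => intervalIntegral.integral_const_mul _ _
  · exact fun k _ => (continuous_const.mul (hM.matrix_elem k j)).intervalIntegrable a b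

lemma ae_ne_real (c : ℝ) : ∀ᵐ s : ℝ, s ≠ c := by
  rw [MeasureTheory.ae_iff]
  simp only [ne_eq, not_not, Set.setOf_eq_eq_singleton]
  exact Real.volume_singleton

end Helpers


/-- Theorem 1, trajectory part: the trajectory `x*` of the Nash equilibrium profile from
`x₀` satisfies `x*(τ) = exp(τΛ)·x₀`, the explicit formula
`x*(t+τ) = exp(tΛ)·x*(τ) − exp(τΛ)·∑ⱼ (∫₀ᵗ exp((t−s)Λ)·Sⱼ·exp((T−s)Λᵀ) ds)·(1/dⱼ)·L̂ⱼ·H⁻¹·exp(TΛ)·x₀`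
for `t ∈ [0,T]`, and in particular `x*(t_f) = exp(τΛ)·H⁻¹·exp(TΛ)·x₀`. -/
theorem statement_12 {n : ℕ} (G : GameData n) (hG : G.Valid) (hH : IsUnit G.H)
    (x0 : Fin n → ℝ) (u : Fin n → ℝ → ℝ)
    (hu1 : ∀ i, ∀ t ∈ Set.Icc (0:ℝ) G.T, u i t =
      -(1 / (G.r i * G.d i)) *
        (G.Bhat i ⬝ᵥ (mexp ((G.T - t) • G.Λᵀ)).mulVec
          ((G.Lhat i).mulVec (G.H⁻¹.mulVec ((mexp (G.T • G.Λ)).mulVec x0)))))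
    (hu2 : ∀ i, ∀ t, t ∉ Set.Icc (0:ℝ) G.T → u i t = 0) :
    G.xtraj x0 u G.τ = (mexp (G.τ • G.Λ)).mulVec x0 ∧
      (∀ t ∈ Set.Icc (0:ℝ) G.T,
        G.xtraj x0 u (t + G.τ) =
          (mexp (t • G.Λ)).mulVec (G.xtraj x0 u G.τ) -
            (mexp (G.τ • G.Λ)).mulVec
              (∑ j : Fin n, (G.Phi G.T j t).mulVec
                ((1 / G.d j) •
                  (G.Lhat j).mulVec (G.H⁻¹.mulVec ((mexp (G.T • G.Λ)).mulVec x0))))) ∧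
      G.xtraj x0 u G.tf =
        (mexp (G.τ • G.Λ)).mulVec (G.H⁻¹.mulVec ((mexp (G.T • G.Λ)).mulVec x0)) := by
  obtain ⟨hτ0, hτtf, hr, hd, hL, hω⟩ := hG
  have hT0 : (0:ℝ) ≤ G.T := by simp only [GameData.T]; linarith
  have h1 : G.xtraj x0 u G.τ = (mexp (G.τ • G.Λ)) *ᵥ x0 := by
    have hz : (∫ s in (0:ℝ)..G.τ,
        (mexp ((G.τ - s) • G.Λ)) *ᵥ (∑ j : Fin n, u j (s - G.τ) • G.B j)) = 0 := by
      rw [intervalIntegral.integral_congr_ae (g := fun _ => (0 : Fin n → ℝ)) ?_,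
        intervalIntegral.integral_zero]
      filter_upwards [ae_ne_real G.τ] with s hs hmem
      rw [Set.uIoc_of_le hτ0] at hmem
      have hsτ : s < G.τ := lt_of_le_of_ne hmem.2 hs
      have hz' : ∀ j, u j (s - G.τ) = 0 := fun j => hu2 j _ (fun hc => by
        have := hc.1; linarith)
      simp [hz']
    simp only [GameData.xtraj]
    rw [hz, add_zero]
  have h2 : ∀ t ∈ Set.Icc (0:ℝ) G.T,
      G.xtraj x0 u (t + G.τ) =
        (mexp (t • G.Λ)).mulVec (G.xtraj x0 u G.τ) -
          (mexp (G.τ • G.Λ)).mulVec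
            (∑ j : Fin n, (G.Phi G.T j t).mulVec
              ((1 / G.d j) •
                (G.Lhat j).mulVec (G.H⁻¹.mulVec ((mexp (G.T • G.Λ)).mulVec x0)))) := by
    rintro t ⟨ht0, htT⟩
    set w : Fin n → ℝ := G.H⁻¹.mulVec ((mexp (G.T • G.Λ)).mulVec x0) with hw
    have step_j : ∀ (j : Fin n) (σ : ℝ),
        (mexp (G.τ • G.Λ) * (mexp ((t - σ) • G.Λ) * G.S j * mexp ((G.T - σ) • G.Λᵀ))).mulVec
          ((1 / G.d j) • (G.Lhat j).mulVec w) =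
        ((1 / (G.r j * G.d j)) *
            (G.Bhat j ⬝ᵥ (mexp ((G.T - σ) • G.Λᵀ)).mulVec ((G.Lhat j).mulVec w))) •
          (mexp ((t - σ) • G.Λ)).mulVec (G.B j) := by
      intro j σ
      simp only [GameData.S]
      rw [← Matrix.mulVec_mulVec, ← Matrix.mulVec_mulVec, ← Matrix.mulVec_mulVec]
      simp only [Matrix.mulVec_smul, Matrix.smul_mulVec, vecMulVec_mulVec',
        dotProduct_smul, smul_smul, smul_eq_mul]
      simp only [GameData.Bhat, Matrix.mulVec_mulVec]
      rw [show mexp (G.τ • G.Λ) * (mexp ((t - σ) • G.Λ) * mexp ((-G.τ) • G.Λ))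
            = mexp ((t - σ) • G.Λ) by
          rw [← mexp_smul_add, ← mexp_smul_add,
            show G.τ + (t - σ + -G.τ) = t - σ from by ring]]
      congr 1
      ring
    have hcP0 : ∀ j : Fin n, Continuous fun s : ℝ =>
        mexp ((t - s) • G.Λ) * G.S j * mexp ((G.T - s) • G.Λᵀ) := fun j =>
      ((continuous_mexp_smul G.Λ (continuous_const.sub continuous_id)).matrix_mul
        continuous_const).matrix_mul
        (continuous_mexp_smul G.Λᵀ (continuous_const.sub continuous_id))
    have hcP : ∀ j : Fin n, Continuous fun s : ℝ =>
        mexp (G.τ • G.Λ) * (mexp ((t - s) • G.Λ) * G.S j * mexp ((G.T - s) • G.Λᵀ)) :=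
      fun j => continuous_const.matrix_mul (hcP0 j)
    have hkey : (∫ s in (0:ℝ)..(t + G.τ),
        (mexp ((t + G.τ - s) • G.Λ)).mulVec (∑ j : Fin n, u j (s - G.τ) • G.B j))
        = ∫ s in (0:ℝ)..t, -∑ j : Fin n,
            (mexp (G.τ • G.Λ) *
              (mexp ((t - s) • G.Λ) * G.S j * mexp ((G.T - s) • G.Λᵀ))).mulVec
              ((1 / G.d j) • (G.Lhat j).mulVec w) := by
      have hind : (∫ s in (0:ℝ)..(t + G.τ), (mexp ((t + G.τ - s) • G.Λ)).mulVec
          (∑ j : Fin n, u j (s - G.τ) • G.B j))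
          = ∫ s in (0:ℝ)..(t + G.τ), (Set.Ioc G.τ (t + G.τ)).indicator
              (fun s' => -∑ j : Fin n, (mexp (G.τ • G.Λ) *
                (mexp ((t - (s' - G.τ)) • G.Λ) * G.S j *
                  mexp ((G.T - (s' - G.τ)) • G.Λᵀ))).mulVec
                  ((1 / G.d j) • (G.Lhat j).mulVec w)) s := by
        apply intervalIntegral.integral_congr_ae
        filter_upwards [ae_ne_real G.τ] with s hs hmem
        rw [Set.uIoc_of_le (by linarith : (0:ℝ) ≤ t + G.τ)] at hmem
        rcases lt_or_gt_of_ne hs with hlt | hgt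
        · rw [Set.indicator_of_notMem (fun hc => absurd hc.1 (not_lt.mpr hlt.le))]
          have hz' : ∀ j, u j (s - G.τ) = 0 := fun j => hu2 j _ (fun hc => by
            have := hc.1; linarith)
          simp [hz']
        · rw [Set.indicator_of_mem (Set.mem_Ioc.mpr ⟨hgt, hmem.2⟩)]
          have hm2 := hmem.2
          have hσ : s - G.τ ∈ Set.Icc (0:ℝ) G.T := Set.mem_Icc.mpr ⟨by linarith, by linarith⟩
          rw [mulVec_finset_sum, ← Finset.sum_neg_distrib]
          refine Finset.sum_congr rfl fun j _ => ?_
          rw [Matrix.mulVec_smul, step_j j (s - G.τ), hu1 j _ hσ,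
            show t + G.τ - s = t - (s - G.τ) from by ring, neg_mul, neg_smul]
      rw [hind, intervalIntegral.integral_of_le (by linarith : (0:ℝ) ≤ t + G.τ),
        MeasureTheory.setIntegral_indicator measurableSet_Ioc,
        Set.inter_eq_self_of_subset_right (Set.Ioc_subset_Ioc_left hτ0),
        ← intervalIntegral.integral_of_le (by linarith : G.τ ≤ t + G.τ)]
      have hsub := intervalIntegral.integral_comp_sub_right (a := G.τ) (b := t + G.τ)
        (fun σ => -∑ j : Fin n, (mexp (G.τ • G.Λ) *
          (mexp ((t - σ) • G.Λ) * G.S j * mexp ((G.T - σ) • G.Λᵀ))).mulVec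
          ((1 / G.d j) • (G.Lhat j).mulVec w)) G.τ
      rw [sub_self, add_sub_cancel_right] at hsub
      exact hsub
    have hone : ∀ j : Fin n, (∫ s in (0:ℝ)..t, (mexp (G.τ • G.Λ) *
        (mexp ((t - s) • G.Λ) * G.S j * mexp ((G.T - s) • G.Λᵀ))).mulVec
        ((1 / G.d j) • (G.Lhat j).mulVec w))
        = (mexp (G.τ • G.Λ)).mulVec
            ((G.Phi G.T j t).mulVec ((1 / G.d j) • (G.Lhat j).mulVec w)) := by
      intro j
      rw [integral_mulVec (hcP j) _ 0 t, of_integral_mul_left _ (hcP0 j) 0 t,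
        ← Matrix.mulVec_mulVec]
      rfl
    have hsum : (∫ s in (0:ℝ)..t, -∑ j : Fin n, (mexp (G.τ • G.Λ) *
        (mexp ((t - s) • G.Λ) * G.S j * mexp ((G.T - s) • G.Λᵀ))).mulVec
        ((1 / G.d j) • (G.Lhat j).mulVec w))
        = -(mexp (G.τ • G.Λ)).mulVec
            (∑ j : Fin n, (G.Phi G.T j t).mulVec ((1 / G.d j) • (G.Lhat j).mulVec w)) := by
      rw [intervalIntegral.integral_neg, intervalIntegral.integral_finset_sum
        (fun j _ => ((hcP j).matrix_mulVec continuous_const).intervalIntegrable 0 t)]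
      simp_rw [hone]
      rw [← mulVec_finset_sum]
    rw [h1]
    simp only [GameData.xtraj]
    rw [hkey, hsum, Matrix.mulVec_mulVec, ← mexp_smul_add, sub_eq_add_neg]
  refine ⟨h1, h2, ?_⟩
  have h3 := h2 G.T ⟨hT0, le_refl G.T⟩
  rw [show G.T + G.τ = G.tf from by simp [GameData.T], h1] at h3
  rw [h3, Matrix.mulVec_mulVec, ← mexp_smul_add,
    show G.T + G.τ = G.τ + G.T from add_comm _ _, mexp_smul_add,
    ← Matrix.mulVec_mulVec, ← Matrix.mulVec_sub]
  have hHw : G.H.mulVec (G.H⁻¹.mulVec ((mexp (G.T • G.Λ)).mulVec x0))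
      = (mexp (G.T • G.Λ)).mulVec x0 := by
    rw [Matrix.mulVec_mulVec, Matrix.mul_nonsing_inv _ ((Matrix.isUnit_iff_isUnit_det _).mp hH),
      Matrix.one_mulVec]
  have key : ∀ v : Fin n → ℝ,
      G.H.mulVec v - ∑ j : Fin n, (G.Phi G.T j G.T).mulVec ((1 / G.d j) • (G.Lhat j).mulVec v)
      = v := by
    intro v
    simp only [GameData.H, Matrix.add_mulVec, Matrix.one_mulVec, finset_sum_mulVec,
      Matrix.smul_mulVec]
    have hterm : ∀ j : Fin n,
        (G.Phi G.T j G.T).mulVec ((1 / G.d j) • (G.Lhat j).mulVec v)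
        = (1 / G.d j) • ((G.Psi j * G.Lhat j).mulVec v) := by
      intro j
      rw [Matrix.mulVec_smul, ← Matrix.mulVec_mulVec]
      rfl
    simp_rw [hterm]
    rw [add_sub_cancel_right]
  have hfin := key (G.H⁻¹.mulVec ((mexp (G.T • G.Λ)).mulVec x0))
  rw [hHw] at hfin
  exact congrArg (mexp (G.τ • G.Λ)).mulVec hfin
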